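/- (Theorem 2, dual optimality and zero duality gap) Suppose σ̄ ≥ 0, G(σ̄) = Q + σ̄L₀ is positive definite, x̄ = G(σ̄)⁻¹c lies in the Lorentz cone C, and σ̄ · (x̄ᵀL₀x̄) = 0. Then σ̄ is a global maximizer of P^d over S_a⁺, i.e. P^d(σ) ≤ P^d(σ̄) for all σ ∈ S_a⁺, and min_{x ∈ C} P(x) = P(x̄) = P^d(σ̄) = max_{σ ∈ S_a⁺} P^d(σ). -/

import Mathlib

open Matrix

/-- The Lorentz matrix `L₀ = diag(−1, I_{n−1})`. -/
noncomputable def L0 (n : ℕ) [NeZero n] : Matrix (Fin n) (Fin n) ℝ :=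
  Matrix.diagonal (fun i => if i = 0 then (-1 : ℝ) else 1)

/-- The Lorentz cone `C = {x : ‖x₂‖ ≤ x₁, x₁ > 0}`, with the Euclidean norm of the
tail written as the square root of the sum of squares. -/
noncomputable def lorentzCone (n : ℕ) [NeZero n] : Set (Fin n → ℝ) :=
  {x | Real.sqrt (∑ i ∈ Finset.univ \ {(0 : Fin n)}, (x i) ^ 2) ≤ x 0 ∧ 0 < x 0}

/-- The primal objective `P(x) = ½ xᵀQx − cᵀx`. -/
noncomputable def Pobj (n : ℕ) (Q : Matrix (Fin n) (Fin n) ℝ) (c : Fin n → ℝ)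
    (x : Fin n → ℝ) : ℝ :=
  (1 / 2) * (x ⬝ᵥ (Q *ᵥ x)) - c ⬝ᵥ x

/-- `G(σ) = Q + σ L₀`. -/
noncomputable def Gm (n : ℕ) [NeZero n] (Q : Matrix (Fin n) (Fin n) ℝ) (σ : ℝ) :
    Matrix (Fin n) (Fin n) ℝ :=
  Q + σ • L0 n

/-- The total complementary function `Ξ(x, σ) = ½ xᵀG(σ)x − cᵀx`. -/
noncomputable def Xi (n : ℕ) [NeZero n] (Q : Matrix (Fin n) (Fin n) ℝ) (c : Fin n → ℝ)
    (x : Fin n → ℝ) (σ : ℝ) : ℝ :=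
  (1 / 2) * (x ⬝ᵥ ((Gm n Q σ) *ᵥ x)) - c ⬝ᵥ x

/-- The canonical dual objective `P^d(σ) = −½ cᵀG(σ)⁻¹c`. -/
noncomputable def Pd (n : ℕ) [NeZero n] (Q : Matrix (Fin n) (Fin n) ℝ) (c : Fin n → ℝ)
    (σ : ℝ) : ℝ :=
  -(1 / 2) * (c ⬝ᵥ ((Gm n Q σ)⁻¹ *ᵥ c))


lemma L0_quad (n : ℕ) [NeZero n] (x : Fin n → ℝ) :
    x ⬝ᵥ (L0 n *ᵥ x) = -(x 0)^2 + ∑ i ∈ Finset.univ \ {(0 : Fin n)}, (x i)^2 := by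
  have : x ⬝ᵥ (L0 n *ᵥ x) = ∑ i, x i * ((if i = 0 then (-1:ℝ) else 1) * x i) := by
    simp [L0, dotProduct, Matrix.mulVec_diagonal]
  rw [this, ← Finset.add_sum_erase _ _ (Finset.mem_univ (0 : Fin n)),
    Finset.sdiff_singleton_eq_erase]
  congr 1
  · simp [pow_two]
  · exact Finset.sum_congr rfl fun i hi => by
      rw [if_neg (Finset.ne_of_mem_erase hi)]; ring

lemma cone_L0_nonpos (n : ℕ) [NeZero n] (x : Fin n → ℝ) (hx : x ∈ lorentzCone n) :
    x ⬝ᵥ (L0 n *ᵥ x) ≤ 0 := by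
  obtain ⟨h1, h2⟩ := hx
  rw [L0_quad]
  have hs : (0:ℝ) ≤ ∑ i ∈ Finset.univ \ {(0 : Fin n)}, (x i)^2 :=
    Finset.sum_nonneg fun i _ => sq_nonneg _
  nlinarith [Real.sq_sqrt hs, Real.sqrt_nonneg (∑ i ∈ Finset.univ \ {(0 : Fin n)}, (x i)^2), h1]

lemma quad_identity (n : ℕ) (G : Matrix (Fin n) (Fin n) ℝ) (hs : G.IsSymm)
    (c x y : Fin n → ℝ) (hy : G *ᵥ y = c) :
    (1/2) * (x ⬝ᵥ (G *ᵥ x)) - c ⬝ᵥ x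
      = ((1/2) * (y ⬝ᵥ (G *ᵥ y)) - c ⬝ᵥ y) + (1/2) * ((x - y) ⬝ᵥ (G *ᵥ (x - y))) := by
  have swap : x ⬝ᵥ (G *ᵥ y) = y ⬝ᵥ (G *ᵥ x) := by
    rw [Matrix.dotProduct_mulVec, ← Matrix.mulVec_transpose, hs, dotProduct_comm]
  have hc : ∀ v : Fin n → ℝ, c ⬝ᵥ v = y ⬝ᵥ (G *ᵥ v) := by
    intro v
    rw [← hy, dotProduct_comm, Matrix.dotProduct_mulVec, ← Matrix.mulVec_transpose, hs,
      dotProduct_comm]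
  rw [hc x, hc y]
  simp only [Matrix.mulVec_sub, dotProduct_sub, sub_dotProduct, swap]
  ring

/-- Theorem 2, dual optimality and zero duality gap: under the same
hypotheses, `σ̄` globally maximizes `P^d` over `S_a⁺`, and
`min_{x ∈ C} P(x) = P(x̄) = P^d(σ̄) = max_{σ ∈ S_a⁺} P^d(σ)`. -/
theorem dual_optimality_zero_gap {n : ℕ} [NeZero n] (hn : 2 ≤ n)
    (Q : Matrix (Fin n) (Fin n) ℝ) (hQ : Q.IsSymm) (c : Fin n → ℝ)
    (σbar : ℝ) (hσ : 0 ≤ σbar) (hG : (Gm n Q σbar).PosDef)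
    (xbar : Fin n → ℝ) (hx : xbar = (Gm n Q σbar)⁻¹ *ᵥ c)
    (hxC : xbar ∈ lorentzCone n)
    (hcomp : σbar * (xbar ⬝ᵥ ((L0 n) *ᵥ xbar)) = 0) :
    (∀ σ : ℝ, 0 ≤ σ → (Gm n Q σ).PosDef → Pd n Q c σ ≤ Pd n Q c σbar) ∧
    (∀ x ∈ lorentzCone n, Pobj n Q c xbar ≤ Pobj n Q c x) ∧
    Pobj n Q c xbar = Pd n Q c σbar := by
  have hsymm : ∀ σ : ℝ, (Gm n Q σ).IsSymm := by
    intro σ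
    unfold Gm L0
    rw [Matrix.IsSymm, Matrix.transpose_add, hQ, Matrix.transpose_smul,
      Matrix.diagonal_transpose]
  have expand : ∀ (σ : ℝ) (x : Fin n → ℝ),
      x ⬝ᵥ (Gm n Q σ *ᵥ x) = x ⬝ᵥ (Q *ᵥ x) + σ * (x ⬝ᵥ (L0 n *ᵥ x)) := by
    intro σ x
    unfold Gm
    rw [Matrix.add_mulVec, dotProduct_add, Matrix.smul_mulVec, dotProduct_smul,
      smul_eq_mul]
  have key : ∀ σ : ℝ, (Gm n Q σ).PosDef → ∀ x : Fin n → ℝ,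
      Pd n Q c σ ≤ (1/2) * (x ⬝ᵥ (Gm n Q σ *ᵥ x)) - c ⬝ᵥ x := by
    intro σ hpd x
    set y := (Gm n Q σ)⁻¹ *ᵥ c with hy
    have hyc : Gm n Q σ *ᵥ y = c := by
      rw [hy, Matrix.mulVec_mulVec,
        Matrix.mul_nonsing_inv _ (isUnit_iff_ne_zero.mpr hpd.det_pos.ne'), Matrix.one_mulVec]
    have hPd : Pd n Q c σ = (1/2) * (y ⬝ᵥ (Gm n Q σ *ᵥ y)) - c ⬝ᵥ y := by
      rw [Pd, ← hy, hyc, dotProduct_comm y c]; ring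
    rw [hPd, quad_identity n (Gm n Q σ) (hsymm σ) c x y hyc]
    have hnn : 0 ≤ (x - y) ⬝ᵥ (Gm n Q σ *ᵥ (x - y)) := by
      have := hpd.posSemidef.dotProduct_mulVec_nonneg (x - y); rwa [star_trivial] at this
    linarith
  have hGxbar : Gm n Q σbar *ᵥ xbar = c := by
    rw [hx, Matrix.mulVec_mulVec,
      Matrix.mul_nonsing_inv _ (isUnit_iff_ne_zero.mpr hG.det_pos.ne'), Matrix.one_mulVec]
  have hPdbar : Pd n Q c σbar = Pobj n Q c xbar := by
    have h1 : Pd n Q c σbar = (1/2) * (xbar ⬝ᵥ (Gm n Q σbar *ᵥ xbar)) - c ⬝ᵥ xbar := by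
      rw [Pd, ← hx, hGxbar, dotProduct_comm xbar c]; ring
    rw [h1, expand, Pobj]
    linarith [hcomp]
  have htbar : xbar ⬝ᵥ (L0 n *ᵥ xbar) ≤ 0 := cone_L0_nonpos n xbar hxC
  refine ⟨?_, ?_, hPdbar.symm⟩
  · intro σ hσ0 hpd
    have h := key σ hpd xbar
    rw [expand σ xbar] at h
    have hst : σ * (xbar ⬝ᵥ (L0 n *ᵥ xbar)) ≤ 0 :=
      mul_nonpos_iff.mpr (Or.inl ⟨hσ0, htbar⟩)
    rw [hPdbar, Pobj]
    linarith
  · intro x hxmem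
    have h := key σbar hG x
    rw [expand σbar x] at h
    have hst : σbar * (x ⬝ᵥ (L0 n *ᵥ x)) ≤ 0 :=
      mul_nonpos_iff.mpr (Or.inl ⟨hσ, cone_L0_nonpos n x hxmem⟩)
    rw [← hPdbar, Pobj]
    linarith
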